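/- Let 0 < α < 1 and σ ∈ (0,1). If u : [0,T] → ℝ is continuously differentiable on (0, t_1] with |u'(s)| ≤ C s^{σ-1}, then the first-step L1 truncation error satisfies |(1/Γ(1-α)) ∫_0^{t_1} (t_1-s)^{-α} [ (u(t_1)-u(0))/τ - u'(s) ] ds | ≤ C' τ^{σ-α}, where t_1 = τ. In particular, ∫_0^{t_1} (t_1-s)^{-α} s^{σ-1} ds = t_1^{σ-α} B(1-α, σ). -/

import Mathlib

open MeasureTheory intervalIntegral Set

lemma beta_intble (τ a b : ℝ) (hτ : 0 < τ) (ha : -1 < a) (hb : -1 < b) :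
    IntervalIntegrable (fun s => s ^ a * (τ - s) ^ b) volume 0 τ := by
  have h2 : (0:ℝ) < τ / 2 := by linarith
  apply IntervalIntegrable.trans (b := τ / 2)
  · apply IntervalIntegrable.mul_continuousOn (intervalIntegral.intervalIntegrable_rpow' ha)
    apply ContinuousOn.rpow_const ((continuous_const.sub continuous_id).continuousOn)
    intro x hx
    rw [uIcc_of_le (by linarith : (0:ℝ) ≤ τ/2)] at hx
    left
    have : x ≤ τ / 2 := hx.2
    show τ - x ≠ 0
    intro h; nlinarith
  · apply IntervalIntegrable.continuousOn_mul
    · have h1 : IntervalIntegrable (fun x : ℝ => x ^ b) volume (τ/2) 0 :=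
        (intervalIntegral.intervalIntegrable_rpow' hb).symm
      have := h1.comp_sub_left τ
      have e : τ - τ/2 = τ/2 := by ring
      rw [e] at this; simpa using this
    · apply ContinuousOn.rpow_const continuousOn_id
      intro x hx
      rw [uIcc_of_le (by linarith : τ/2 ≤ τ)] at hx
      left
      have : τ/2 ≤ x := hx.1
      intro h; rw [id] at h; nlinarith

lemma Cgamma_ne (a : ℝ) (ha : 0 < a) : Complex.Gamma (a : ℂ) ≠ 0 := by
  rw [Complex.Gamma_ofReal]
  exact_mod_cast (Real.Gamma_pos_of_pos ha).ne'

lemma beta_val (a b τ : ℝ) (ha : 0 < a) (hb : 0 < b) (hτ : 0 < τ) :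
    ∫ s in (0:ℝ)..τ, s ^ (a - 1) * (τ - s) ^ (b - 1)
      = τ ^ (a + b - 1) * (Real.Gamma a * Real.Gamma b / Real.Gamma (a + b)) := by
  have hre_a : 0 < Complex.re (a : ℂ) := by simpa using ha
  have hre_b : 0 < Complex.re (b : ℂ) := by simpa using hb
  have hab : Complex.Gamma ((a : ℂ) + b) ≠ 0 := by
    have := Cgamma_ne (a + b) (by linarith)
    simpa using this
  have hbeta : Complex.betaIntegral a b
      = Complex.Gamma a * Complex.Gamma b / Complex.Gamma ((a : ℂ) + b) := by
    rw [eq_div_iff hab, mul_comm, ← Complex.Gamma_mul_Gamma_eq_betaIntegral hre_a hre_b]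
  have hscaled := Complex.betaIntegral_scaled (a : ℂ) (b : ℂ) hτ
  have hcast : ((∫ s in (0:ℝ)..τ, s ^ (a - 1) * (τ - s) ^ (b - 1) : ℝ) : ℂ)
      = ∫ s in (0:ℝ)..τ, (s : ℂ) ^ ((a : ℂ) - 1) * ((τ : ℂ) - s) ^ ((b : ℂ) - 1) := by
    rw [← intervalIntegral.integral_ofReal]
    apply intervalIntegral.integral_congr
    intro x hx
    rw [uIcc_of_le hτ.le] at hx
    push_cast
    rw [Complex.ofReal_cpow hx.1, Complex.ofReal_cpow (by linarith [hx.2] : (0:ℝ) ≤ τ - x)]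
    push_cast
    ring
  have : ((∫ s in (0:ℝ)..τ, s ^ (a - 1) * (τ - s) ^ (b - 1) : ℝ) : ℂ)
      = ((τ ^ (a + b - 1) * (Real.Gamma a * Real.Gamma b / Real.Gamma (a + b)) : ℝ) : ℂ) := by
    rw [hcast, hscaled, hbeta]
    rw [show ((a : ℂ) + b - 1) = ((a + b - 1 : ℝ) : ℂ) by push_cast; ring,
      ← Complex.ofReal_cpow hτ.le]
    push_cast [Complex.Gamma_ofReal]
    rw [show ((a : ℂ) + b) = ((a + b : ℝ) : ℂ) by push_cast; ring, Complex.Gamma_ofReal]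
  exact_mod_cast this

theorem L1_first_step_truncation (α σ : ℝ) (hα0 : 0 < α) (hα1 : α < 1)
    (hσ0 : 0 < σ) (hσ1 : σ < 1) (C : ℝ) (hC : 0 ≤ C) :
    ∃ C' : ℝ, 0 < C' ∧ ∀ τ : ℝ, 0 < τ → ∀ u u' : ℝ → ℝ,
      ContinuousOn u (Set.Icc 0 τ) →
      (∀ s ∈ Set.Ioc (0 : ℝ) τ, HasDerivAt u (u' s) s) →
      (∀ s ∈ Set.Ioc (0 : ℝ) τ, |u' s| ≤ C * s ^ (σ - 1)) →
      (|(1 / Real.Gamma (1 - α)) *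
          ∫ s in (0 : ℝ)..τ, (τ - s) ^ (-α) * ((u τ - u 0) / τ - u' s)|
        ≤ C' * τ ^ (σ - α)) ∧
      (∫ s in (0 : ℝ)..τ, (τ - s) ^ (-α) * s ^ (σ - 1)
        = τ ^ (σ - α) *
            (Real.Gamma (1 - α) * Real.Gamma σ / Real.Gamma (1 - α + σ))) := by
  have hΓ : 0 < Real.Gamma (1 - α) := Real.Gamma_pos_of_pos (by linarith)
  set B : ℝ := Real.Gamma (1 - α) * Real.Gamma σ / Real.Gamma (1 - α + σ) with hBdef
  have hBpos : 0 < B := by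
    have h1 := Real.Gamma_pos_of_pos hσ0
    have h2 := Real.Gamma_pos_of_pos (show (0:ℝ) < 1 - α + σ by linarith)
    positivity
  have hfac : 0 < 1 / (σ * (1 - α)) + B := by
    have : 0 < 1 / (σ * (1 - α)) := by
      apply div_pos one_pos; nlinarith
    linarith
  refine ⟨1 / Real.Gamma (1 - α) * C * (1 / (σ * (1 - α)) + B) + 1, ?_, ?_⟩
  · have : 0 ≤ 1 / Real.Gamma (1 - α) * C * (1 / (σ * (1 - α)) + B) :=
      mul_nonneg (mul_nonneg (by positivity) hC) hfac.le
    linarith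
  intro τ hτ u u' hu hderiv hbound
  -- the beta identity
  have h2 : (∫ s in (0:ℝ)..τ, (τ - s) ^ (-α) * s ^ (σ - 1))
      = ∫ s in (0:ℝ)..τ, s ^ (σ - 1) * (τ - s) ^ ((1 - α) - 1) := by
    apply intervalIntegral.integral_congr
    intro x _
    rw [show (1 - α) - 1 = -α by ring]; ring
  have hbeta_eq : (∫ s in (0:ℝ)..τ, (τ - s) ^ (-α) * s ^ (σ - 1)) = τ ^ (σ - α) * B := by
    rw [h2, beta_val σ (1 - α) τ hσ0 (by linarith) hτ,
      show σ + (1 - α) - 1 = σ - α by ring, show σ + (1 - α) = 1 - α + σ by ring, hBdef]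
    ring
  refine ⟨?_, hbeta_eq⟩
  -- integrability facts
  have hσ1' : (-1:ℝ) < σ - 1 := by linarith
  have hα1' : (-1:ℝ) < -α := by linarith
  have hs_int : IntervalIntegrable (fun s : ℝ => C * s ^ (σ - 1)) volume 0 τ :=
    (intervalIntegral.intervalIntegrable_rpow' hσ1').const_mul C
  have hu'_int : IntervalIntegrable u' volume 0 τ := by
    rw [intervalIntegrable_iff_integrableOn_Ioc_of_le hτ.le]
    have hder_eq : Set.EqOn (deriv u) u' (Set.Ioc 0 τ) := fun s hs => (hderiv s hs).deriv
    apply IntegrableOn.congr_fun ?_ hder_eq measurableSet_Ioc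
    apply Integrable.mono' (g := fun s => C * s ^ (σ - 1))
      ((intervalIntegrable_iff_integrableOn_Ioc_of_le hτ.le).mp hs_int)
      (measurable_deriv u).aestronglyMeasurable
    filter_upwards [ae_restrict_mem measurableSet_Ioc] with s hs
    rw [Real.norm_eq_abs, hder_eq hs]
    exact hbound s hs
  have hftc : (∫ s in (0:ℝ)..τ, u' s) = u τ - u 0 := by
    apply intervalIntegral.integral_eq_sub_of_hasDeriv_right_of_le hτ.le hu ?_ hu'_int
    intro x hx
    exact (hderiv x ⟨hx.1, hx.2.le⟩).hasDerivWithinAt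
  have hI1 : (∫ s in (0:ℝ)..τ, C * s ^ (σ - 1)) = C * (τ ^ σ / σ) := by
    rw [intervalIntegral.integral_const_mul, integral_rpow (Or.inl hσ1'),
      show σ - 1 + 1 = σ by ring, Real.zero_rpow hσ0.ne', sub_zero]
  have hKbound : |(u τ - u 0) / τ| ≤ C * τ ^ (σ - 1) / σ := by
    have h1 : |u τ - u 0| ≤ C * (τ ^ σ / σ) := by
      rw [← hftc, ← hI1]
      have := intervalIntegral.norm_integral_le_abs_of_norm_le (μ := volume) (f := u')
        (g := fun s => C * s ^ (σ - 1)) (a := 0) (b := τ) ?_ hs_int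
      · refine this.trans (le_of_eq ?_)
        rw [abs_of_nonneg]
        rw [hI1]; positivity
      · rw [Set.uIoc_of_le hτ.le]
        filter_upwards [ae_restrict_mem measurableSet_Ioc] with s hs
        exact hbound s hs
    rw [abs_div, abs_of_pos hτ, div_le_div_iff₀ hτ hσ0]
    have hτpow : τ ^ (σ - 1) * τ = τ ^ σ := by
      rw [← Real.rpow_add_one hτ.ne' (σ - 1), show σ - 1 + 1 = σ by ring]
    calc |u τ - u 0| * σ ≤ C * (τ ^ σ / σ) * σ := mul_le_mul_of_nonneg_right h1 hσ0.le
      _ = C * τ ^ σ := by field_simp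
      _ = C * τ ^ (σ - 1) * τ := by rw [← hτpow]; ring
  set K : ℝ := (u τ - u 0) / τ with hK
  set g : ℝ → ℝ := fun s => (τ - s) ^ (-α) * (C * τ ^ (σ - 1) / σ) +
      C * (s ^ (σ - 1) * (τ - s) ^ (-α)) with hg
  have hsub_int : IntervalIntegrable (fun s : ℝ => (τ - s) ^ (-α)) volume 0 τ := by
    have h1 : IntervalIntegrable (fun x : ℝ => x ^ (-α)) volume τ 0 :=
      (intervalIntegral.intervalIntegrable_rpow' hα1').symm
    have := h1.comp_sub_left τ
    simpa using this
  have hg1_int : IntervalIntegrable (fun s : ℝ => (τ - s) ^ (-α) * (C * τ ^ (σ - 1) / σ))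
      volume 0 τ := hsub_int.mul_const _
  have hg2_int : IntervalIntegrable (fun s : ℝ => C * (s ^ (σ - 1) * (τ - s) ^ (-α)))
      volume 0 τ := (beta_intble τ (σ - 1) (-α) hτ hσ1' hα1').const_mul C
  have hg_int : IntervalIntegrable g volume 0 τ := hg1_int.add hg2_int
  have hmain : |∫ s in (0:ℝ)..τ, (τ - s) ^ (-α) * (K - u' s)| ≤ |∫ s in (0:ℝ)..τ, g s| := by
    refine intervalIntegral.norm_integral_le_abs_of_norm_le
      (f := fun s => (τ - s) ^ (-α) * (K - u' s)) ?_ hg_int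
    rw [Set.uIoc_of_le hτ.le]
    filter_upwards [ae_restrict_mem measurableSet_Ioc] with s hs
    have hτs : (0:ℝ) ≤ τ - s := by linarith [hs.2]
    have hpow : (0:ℝ) ≤ (τ - s) ^ (-α) := Real.rpow_nonneg hτs _
    rw [Real.norm_eq_abs, abs_mul, abs_of_nonneg hpow]
    have habs : |K - u' s| ≤ C * τ ^ (σ - 1) / σ + C * s ^ (σ - 1) := by
      calc |K - u' s| ≤ |K| + |u' s| := abs_sub _ _
        _ ≤ C * τ ^ (σ - 1) / σ + C * s ^ (σ - 1) := add_le_add hKbound (hbound s hs)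
    calc (τ - s) ^ (-α) * |K - u' s|
        ≤ (τ - s) ^ (-α) * (C * τ ^ (σ - 1) / σ + C * s ^ (σ - 1)) := by
          exact mul_le_mul_of_nonneg_left habs hpow
      _ = g s := by rw [hg]; ring
  have hIsub : (∫ s in (0:ℝ)..τ, (τ - s) ^ (-α)) = τ ^ (1 - α) / (1 - α) := by
    rw [intervalIntegral.integral_comp_sub_left (fun x : ℝ => x ^ (-α)) τ, sub_self, sub_zero,
      integral_rpow (Or.inl hα1'), show -α + 1 = 1 - α by ring,
      Real.zero_rpow (by linarith : (1:ℝ) - α ≠ 0), sub_zero]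
  have hgval : (∫ s in (0:ℝ)..τ, g s) = C * τ ^ (σ - α) * (1 / (σ * (1 - α)) + B) := by
    rw [hg]
    rw [intervalIntegral.integral_add hg1_int hg2_int, intervalIntegral.integral_mul_const,
      intervalIntegral.integral_const_mul, hIsub]
    have e : (∫ s in (0:ℝ)..τ, s ^ (σ - 1) * (τ - s) ^ (-α)) = τ ^ (σ - α) * B := by
      rw [← hbeta_eq]
      apply intervalIntegral.integral_congr
      intro x _; ring
    rw [e]
    have hτpow : τ ^ (1 - α) * τ ^ (σ - 1) = τ ^ (σ - α) := by
      rw [← Real.rpow_add hτ, show 1 - α + (σ - 1) = σ - α by ring]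
    have h1α : (1 : ℝ) - α ≠ 0 := by linarith
    have hσne : σ ≠ 0 := hσ0.ne'
    have key : τ ^ (1 - α) / (1 - α) * (C * τ ^ (σ - 1) / σ)
        = C * τ ^ (σ - α) * (1 / (σ * (1 - α))) := by
      rw [← hτpow]; field_simp
    rw [key]; ring
  have hgabs : |∫ s in (0:ℝ)..τ, g s| = C * τ ^ (σ - α) * (1 / (σ * (1 - α)) + B) := by
    rw [hgval, abs_of_nonneg]
    have : (0:ℝ) ≤ τ ^ (σ - α) := Real.rpow_nonneg hτ.le _
    exact mul_nonneg (mul_nonneg hC this) hfac.le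
  rw [abs_mul, abs_of_nonneg (by positivity : (0:ℝ) ≤ 1 / Real.Gamma (1 - α))]
  have hτpow_nn : (0:ℝ) ≤ τ ^ (σ - α) := Real.rpow_nonneg hτ.le _
  calc 1 / Real.Gamma (1 - α) * |∫ s in (0:ℝ)..τ, (τ - s) ^ (-α) * (K - u' s)|
      ≤ 1 / Real.Gamma (1 - α) * (C * τ ^ (σ - α) * (1 / (σ * (1 - α)) + B)) := by
        apply mul_le_mul_of_nonneg_left _ (by positivity)
        rw [← hgabs]; exact hmain
    _ = (1 / Real.Gamma (1 - α) * C * (1 / (σ * (1 - α)) + B)) * τ ^ (σ - α) := by ring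
    _ ≤ (1 / Real.Gamma (1 - α) * C * (1 / (σ * (1 - α)) + B) + 1) * τ ^ (σ - α) := by
        nlinarith
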